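/- For every graph G, nd(G) ≤ 2^{vc(G)} + vc(G), where vc(G) is the vertex cover number of G. -/

import Mathlib

open SimpleGraph

/-- Two vertices have the same neighborhood type. -/
def SameNbhdType {V : Type*} (G : SimpleGraph V) (u v : V) : Prop :=
  G.neighborSet u \ {v} = G.neighborSet v \ {u}

/-- `f` is a partition of the vertices of `G` into `n` induced copies of `H`. -/
def IsCopyPartition {V W : Type*} (G : SimpleGraph V) (H : SimpleGraph W)
    {n : ℕ} (f : Fin n → Set V) : Prop :=
  (∀ i, Nonempty ((G.induce (f i)) ≃g H)) ∧
    (Pairwise fun i j => Disjoint (f i) (f j)) ∧ (⋃ i, f i) = Set.univ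

/-- `G` can be partitioned into induced copies of `H`. -/
def PartitionedIntoCopies {V W : Type*} (G : SimpleGraph V) (H : SimpleGraph W) : Prop :=
  ∃ (n : ℕ) (f : Fin n → Set V), IsCopyPartition G H f

/-- Neighborhood diversity of a graph. -/
noncomputable def nd {V : Type*} (G : SimpleGraph V) : ℕ :=
  sInf {w | ∃ C : V → Fin w, ∀ u v, C u = C v → SameNbhdType G u v}

/-- Disjoint union of a family of graphs. -/
def disjointUnionGraph {ι : Type*} {V : ι → Type*} (Gs : ∀ i, SimpleGraph (V i)) :
    SimpleGraph (Σ i, V i) where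
  Adj x y := ∃ (i : ι) (a b : V i), (Gs i).Adj a b ∧ x = ⟨i, a⟩ ∧ y = ⟨i, b⟩
  symm := by constructor; rintro x y ⟨i, a, b, h, rfl, rfl⟩; exact ⟨i, b, a, h.symm, rfl, rfl⟩
  loopless := by
    constructor
    rintro x ⟨i, a, b, h, rfl, h2⟩
    obtain ⟨-, h2⟩ := Sigma.mk.inj_iff.mp h2
    exact (Gs i).irrefl (heq_iff_eq.mp h2 ▸ h)

/-- Substitution of graphs `Gs i` into a template graph `T`. -/
def substGraph {ι : Type*} (T : SimpleGraph ι) {V : ι → Type*}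
    (Gs : ∀ i, SimpleGraph (V i)) : SimpleGraph (Σ i, V i) where
  Adj x y := (∃ (i : ι) (a b : V i), (Gs i).Adj a b ∧ x = ⟨i, a⟩ ∧ y = ⟨i, b⟩) ∨
    (x.1 ≠ y.1 ∧ T.Adj x.1 y.1)
  symm := by
    constructor
    rintro x y (⟨i, a, b, h, rfl, rfl⟩ | ⟨hne, h⟩)
    · exact Or.inl ⟨i, b, a, h.symm, rfl, rfl⟩
    · exact Or.inr ⟨hne.symm, h.symm⟩
  loopless := by
    constructor
    rintro x (⟨i, a, b, h, rfl, h2⟩ | ⟨hne, h⟩)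
    · obtain ⟨-, h2⟩ := Sigma.mk.inj_iff.mp h2
      exact (Gs i).irrefl (heq_iff_eq.mp h2 ▸ h)
    · exact hne rfl

noncomputable def vertexCoverNumber {V : Type*} [Fintype V] (G : SimpleGraph V) : ℕ :=
  sInf {k | ∃ U : Finset V, (∀ u v, G.Adj u v → u ∈ U ∨ v ∈ U) ∧ U.card = k}

theorem stmt_9 {V : Type*} [Fintype V] (G : SimpleGraph V) :
    nd G ≤ 2 ^ vertexCoverNumber G + vertexCoverNumber G := by
  classical
  have hne : vertexCoverNumber G ∈
      {k | ∃ U : Finset V, (∀ u v, G.Adj u v → u ∈ U ∨ v ∈ U) ∧ U.card = k} :=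
    Nat.sInf_mem ⟨Finset.univ.card, Finset.univ,
      fun u v _ => Or.inl (Finset.mem_univ u), rfl⟩
  obtain ⟨U, hcov, hcard⟩ := hne
  set k := vertexCoverNumber G with hk
  have e1 : {x // x ∈ U} ≃ Fin k := U.equivFinOfCardEq hcard
  have e2 : ({x // x ∈ U} → Bool) ≃ Fin (2 ^ k) := by
    apply Fintype.equivFinOfCardEq
    simp [hcard]
  refine Nat.sInf_le ?_
  refine ⟨fun v => if h : v ∈ U then Fin.natAdd (2 ^ k) (e1 ⟨v, h⟩)
    else Fin.castAdd k (e2 (fun x : {x // x ∈ U} => decide (G.Adj v x.1))), ?_⟩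
  have key : ∀ a b : V, a ∉ U → (∀ x : {x // x ∈ U}, G.Adj a x ↔ G.Adj b x) →
      G.neighborSet a \ {b} ⊆ G.neighborSet b \ {a} := by
    intro a b ha hab w hw
    simp only [Set.mem_diff, SimpleGraph.mem_neighborSet, Set.mem_singleton_iff] at hw ⊢
    obtain ⟨hadj, hne⟩ := hw
    have hwU : w ∈ U := (hcov a w hadj).resolve_left ha
    exact ⟨(hab ⟨w, hwU⟩).mp hadj, fun h => G.irrefl (h ▸ hadj)⟩
  intro u v hC
  by_cases hu : u ∈ U <;> by_cases hv : v ∈ U <;>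
    simp only [hu, hv, dif_pos, dif_neg, not_false_iff] at hC
  · -- both in U
    have hval := congrArg Fin.val hC
    simp only [Fin.coe_natAdd] at hval
    have : (⟨u, hu⟩ : {x // x ∈ U}) = ⟨v, hv⟩ :=
      e1.injective (Fin.ext (by omega))
    have huv : u = v := congrArg Subtype.val this
    subst huv
    rfl
  · exfalso
    have hval := congrArg Fin.val hC
    simp only [Fin.coe_natAdd, Fin.coe_castAdd] at hval
    have := (e2 (fun x => decide (G.Adj v x))).isLt
    omega
  · exfalso
    have hval := congrArg Fin.val hC
    simp only [Fin.coe_natAdd, Fin.coe_castAdd] at hval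
    have := (e2 (fun x => decide (G.Adj u x))).isLt
    omega
  · -- both outside U
    have hval := congrArg Fin.val hC
    simp only [Fin.coe_castAdd] at hval
    have h2 : (fun x : {x // x ∈ U} => decide (G.Adj u x.1)) =
        (fun x : {x // x ∈ U} => decide (G.Adj v x.1)) := e2.injective (Fin.ext hval)
    have hfun : ∀ x : {x // x ∈ U}, G.Adj u x ↔ G.Adj v x := fun x =>
      decide_eq_decide.mp (congrFun h2 x)
    exact Set.Subset.antisymm (key u v hu hfun)
      (key v u hv fun x => (hfun x).symm)
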